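/- For the standard Heisenberg Lie algebra with generators J_n (n ∈ ℤ) and central c satisfying [J_n, J_m] = n δ_{n+m,0} c, the Fock module generated from a vacuum annihilated by J_n for n ≥ 0, on which c acts by 1, is irreducible. -/

import Mathlib

open MvPolynomial

/-- Coefficient formula for partial derivatives of multivariate polynomials over `ℂ`. -/
lemma hf_coeff_pderiv (i : ℕ) (m : ℕ →₀ ℕ) (p : MvPolynomial ℕ ℂ) :
    coeff m (pderiv i p) = ((m i : ℂ) + 1) * coeff (m + Finsupp.single i 1) p := by
  induction p using MvPolynomial.induction_on' with
  | add p q hp hq => simp [hp, hq]; ring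
  | monomial u a =>
    rw [pderiv_monomial, coeff_monomial, coeff_monomial]
    by_cases h : u = m + Finsupp.single i 1
    · subst h
      rw [if_pos (add_tsub_cancel_right m (Finsupp.single i 1)), if_pos rfl]
      simp [Finsupp.add_apply, Finsupp.single_eq_same]
      ring
    · rw [if_neg h, mul_zero]
      by_cases h2 : u - Finsupp.single i 1 = m
      · rw [if_pos h2]
        by_cases h3 : u i = 0
        · simp [h3]
        · exfalso
          apply h
          rw [← h2, tsub_add_cancel_of_le]
          exact Finsupp.single_le_iff.2 (Nat.one_le_iff_ne_zero.2 h3)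
      · rw [if_neg h2]

/-- If a polynomial has positive total degree, some partial derivative is nonzero and
has strictly smaller total degree. -/
lemma hf_exists_pderiv (p : MvPolynomial ℕ ℂ) (h : p.totalDegree ≠ 0) :
    ∃ i, pderiv i p ≠ 0 ∧ (pderiv i p).totalDegree < p.totalDegree := by
  -- find a monomial with a nonzero exponent
  have hs : ∃ s ∈ p.support, ∃ i, s i ≠ 0 := by
    by_contra hcon
    push_neg at hcon
    exact h ((totalDegree_eq_zero_iff ℕ p).2 hcon)
  obtain ⟨s, hs, i, hi⟩ := hs
  refine ⟨i, ?_, ?_⟩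
  · -- nonzero: the coefficient at `s - single i 1` is nonzero
    intro h0
    have hle : Finsupp.single i 1 ≤ s := Finsupp.single_le_iff.2 (Nat.one_le_iff_ne_zero.2 hi)
    have hc := hf_coeff_pderiv i (s - Finsupp.single i 1) p
    rw [h0, tsub_add_cancel_of_le hle, coeff_zero] at hc
    have hcs : coeff s p ≠ 0 := (mem_support_iff).1 hs
    rcases mul_eq_zero.1 hc.symm with h | h
    · exact Nat.cast_add_one_ne_zero _ h
    · exact hcs h
  · -- degree drops
    have hpos : 0 < p.totalDegree := Nat.pos_of_ne_zero h
    rw [totalDegree, Finset.sup_lt_iff (by simpa using hpos)]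
    intro m hm
    have hc : coeff m (pderiv i p) ≠ 0 := (mem_support_iff).1 hm
    rw [hf_coeff_pderiv] at hc
    have hc2 : coeff (m + Finsupp.single i 1) p ≠ 0 := fun h0 => hc (by rw [h0, mul_zero])
    have hmem : m + Finsupp.single i 1 ∈ p.support := (mem_support_iff).2 hc2
    have hle := le_totalDegree hmem
    have hsum : ((m + Finsupp.single i 1).sum fun _ e => e) =
        (m.sum fun _ e => e) + 1 := by
      rw [Finsupp.sum_add_index' (fun _ => rfl) (fun _ _ _ => rfl)]
      simp [Finsupp.sum_single_index]
    omega

/-- A nonzero submodule of the polynomial ring closed under all partial derivatives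
contains `1`. -/
lemma hf_fock (Nf : Submodule ℂ (MvPolynomial ℕ ℂ))
    (hd : ∀ k : ℕ, ∀ q ∈ Nf, pderiv k q ∈ Nf)
    (p : MvPolynomial ℕ ℂ) (hp : p ∈ Nf) (hp0 : p ≠ 0) : (1 : MvPolynomial ℕ ℂ) ∈ Nf := by
  have hC : ∀ q ∈ Nf, q ≠ 0 → q.totalDegree = 0 → (1 : MvPolynomial ℕ ℂ) ∈ Nf := by
    intro q hq hq0 hdeg
    have hqC : q = C (coeff 0 q) := by
      ext m
      by_cases hm : m = 0
      · subst hm; simp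
      · rw [coeff_C, if_neg (Ne.symm hm)]
        by_contra hc
        have hmem : m ∈ q.support := (mem_support_iff).2 hc
        have := (totalDegree_eq_zero_iff ℕ q).1 hdeg m hmem
        exact hm (Finsupp.ext this)
    obtain ⟨c, rfl⟩ : ∃ c, q = C c := ⟨coeff 0 q, hqC⟩
    have hc0 : c ≠ 0 := fun h => hq0 (by rw [h, C_0])
    have hmem : c⁻¹ • C c ∈ Nf := Nf.smul_mem _ hq
    have heq : c⁻¹ • (C c : MvPolynomial ℕ ℂ) = 1 := by
      rw [smul_eq_C_mul, ← map_mul, inv_mul_cancel₀ hc0, C_1]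
    rwa [heq] at hmem
  -- strong induction on the total degree
  suffices H : ∀ d : ℕ, ∀ q ∈ Nf, q ≠ 0 → q.totalDegree ≤ d → (1 : MvPolynomial ℕ ℂ) ∈ Nf by
    exact H p.totalDegree p hp hp0 le_rfl
  intro d
  induction d with
  | zero => intro q hq hq0 hdeg; exact hC q hq hq0 (Nat.le_zero.1 hdeg)
  | succ d ih =>
    intro q hq hq0 hdeg
    by_cases h0 : q.totalDegree = 0
    · exact hC q hq hq0 h0
    · obtain ⟨i, hne, hlt⟩ := hf_exists_pderiv q h0
      exact ih (pderiv i q) (hd i q hq) hne (by omega)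

/-- for the standard Heisenberg Lie algebra with generators `J_n`
(`n ∈ ℤ`) and central `c` satisfying `[J_n, J_m] = n δ_{n+m,0} c`, the Fock
module generated from a vacuum annihilated by `J_n` for `n ≥ 0`, on which `c`
acts by `1`, is irreducible: any nonzero submodule is the whole module. -/
theorem heisenberg_fock_irreducible
    (V : Type*) [AddCommGroup V] [Module ℂ V]
    (J : ℤ → Module.End ℂ V) (vac : V) (hvac : vac ≠ 0)
    -- the Heisenberg relations, with the central element acting by 1:
    (hcomm : ∀ n m : ℤ, J n * J m - J m * J n
      = (if n + m = 0 then (n : ℂ) else 0) • (1 : Module.End ℂ V))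
    -- the vacuum is annihilated by the nonnegative modes:
    (hann : ∀ n : ℤ, 0 ≤ n → J n vac = 0)
    -- V is generated from the vacuum by the action of the J_n:
    (hgen : ∀ N : Submodule ℂ V, (∀ n : ℤ, ∀ v ∈ N, J n v ∈ N) → vac ∈ N → N = ⊤) :
    ∀ N : Submodule ℂ V, (∀ n : ℤ, ∀ v ∈ N, J n v ∈ N) → N = ⊥ ∨ N = ⊤ := by
  intro N hN
  by_cases hbot : N = ⊥
  · exact Or.inl hbot
  right
  obtain ⟨v, hvN, hv0⟩ := Submodule.exists_mem_ne_zero_of_ne_bot hbot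
  -- the negative modes commute with each other
  set S : Set (Module.End ℂ V) := Set.range (fun i : ℕ => J (-(i : ℤ) - 1)) with hS
  have hcommS : ∀ a ∈ S, ∀ b ∈ S, a * b = b * a := by
    rintro _ ⟨i, rfl⟩ _ ⟨j, rfl⟩
    have h := hcomm (-(i : ℤ) - 1) (-(j : ℤ) - 1)
    rw [if_neg (by omega), zero_smul] at h
    exact sub_eq_zero.1 h
  letI : CommRing ↥(Algebra.adjoin ℂ S) := Algebra.adjoinCommRingOfComm ℂ hcommS
  set g : ℕ → ↥(Algebra.adjoin ℂ S) :=
    fun i => ⟨J (-(i : ℤ) - 1), Algebra.subset_adjoin ⟨i, rfl⟩⟩ with hg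
  set ψ : MvPolynomial ℕ ℂ →ₐ[ℂ] Module.End ℂ V :=
    (Algebra.adjoin ℂ S).val.comp (MvPolynomial.aeval g) with hψ
  have ψX : ∀ i : ℕ, ψ (X i) = J (-(i : ℤ) - 1) := by
    intro i
    simp [hψ, hg]
  -- commutation of positive modes with ψ
  have key : ∀ (k : ℕ) (p : MvPolynomial ℕ ℂ),
      J ((k : ℤ) + 1) * ψ p - ψ p * J ((k : ℤ) + 1) = ((k : ℂ) + 1) • ψ (pderiv k p) := by
    intro k p
    induction p using MvPolynomial.induction_on with
    | C a =>
      have : ψ (C a) = algebraMap ℂ (Module.End ℂ V) a := by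
        simp [hψ]
      rw [this, pderiv_C, map_zero, smul_zero, sub_eq_zero, Algebra.commutes]
    | add p q hp hq =>
      rw [map_add, map_add, map_add, mul_add, add_mul, smul_add, ← hp, ← hq]
      abel
    | mul_X p j hp =>
      have hQ := hcomm ((k : ℤ) + 1) (-(j : ℤ) - 1)
      rw [map_mul, ψX]
      have expand : J ((k:ℤ)+1) * (ψ p * J (-(j:ℤ)-1)) - ψ p * J (-(j:ℤ)-1) * J ((k:ℤ)+1)
          = (J ((k:ℤ)+1) * ψ p - ψ p * J ((k:ℤ)+1)) * J (-(j:ℤ)-1)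
            + ψ p * (J ((k:ℤ)+1) * J (-(j:ℤ)-1) - J (-(j:ℤ)-1) * J ((k:ℤ)+1)) := by
        noncomm_ring
      rw [expand, hp, hQ]
      have hderiv : pderiv k (p * X j) = pderiv k p * X j + (if k = j then p else 0) := by
        rw [pderiv_mul]
        by_cases hkj : k = j
        · subst hkj; simp
        · simp [pderiv_X_of_ne (Ne.symm hkj), hkj]
      rw [hderiv, map_add, map_mul, ψX, smul_add, smul_mul_assoc]
      congr 1
      by_cases hkj : k = j
      · subst hkj
        rw [if_pos (by ring), if_pos rfl]
        rw [mul_smul_comm, mul_one]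
        congr 1
        push_cast
        ring
      · rw [if_neg (by omega), if_neg hkj, map_zero, smul_zero, zero_smul, mul_zero]
  -- J 0 commutes with ψ
  have key0 : ∀ p : MvPolynomial ℕ ℂ, J 0 * ψ p = ψ p * J 0 := by
    intro p
    induction p using MvPolynomial.induction_on with
    | C a =>
      have : ψ (C a) = algebraMap ℂ (Module.End ℂ V) a := by simp [hψ]
      rw [this, Algebra.commutes]
    | add p q hp hq => rw [map_add, mul_add, add_mul, hp, hq]
    | mul_X p j hp =>
      have hQ := hcomm 0 (-(j : ℤ) - 1)
      have hQ' : J 0 * J (-(j:ℤ)-1) = J (-(j:ℤ)-1) * J 0 :=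
        sub_eq_zero.1 (by rw [hQ]; split <;> simp)
      rw [map_mul, ψX, ← mul_assoc, hp, mul_assoc, hQ', ← mul_assoc]
  -- the evaluation map  p ↦ ψ p vac
  set Φ : MvPolynomial ℕ ℂ →ₗ[ℂ] V :=
    { toFun := fun p => ψ p vac
      map_add' := fun p q => by show ψ (p + q) vac = ψ p vac + ψ q vac; rw [map_add]; rfl
      map_smul' := fun a p => by
        show ψ (a • p) vac = a • ψ p vac
        rw [map_smul]; rfl } with hΦdef
  have hΦapply : ∀ p : MvPolynomial ℕ ℂ, Φ p = ψ p vac := fun _ => rfl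
  have hΦ1 : Φ 1 = vac := by
    show ψ 1 vac = vac
    rw [map_one]; rfl
  have hΦneg : ∀ (i : ℕ) (p : MvPolynomial ℕ ℂ), Φ (X i * p) = J (-(i : ℤ) - 1) (Φ p) := by
    intro i p
    show ψ (X i * p) vac = J (-(i : ℤ) - 1) (ψ p vac)
    rw [map_mul, ψX]; rfl
  have hΦpos : ∀ (k : ℕ) (p : MvPolynomial ℕ ℂ),
      J ((k : ℤ) + 1) (Φ p) = ((k : ℂ) + 1) • Φ (pderiv k p) := by
    intro k p
    have h := congrArg (fun T : Module.End ℂ V => T vac) (key k p)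
    simp only [LinearMap.sub_apply, Module.End.mul_apply, LinearMap.smul_apply] at h
    rw [hann ((k : ℤ) + 1) (by positivity), map_zero, sub_zero] at h
    rw [hΦapply, hΦapply]
    exact h
  have hΦ0 : ∀ p : MvPolynomial ℕ ℂ, J 0 (Φ p) = 0 := by
    intro p
    have h := congrArg (fun T : Module.End ℂ V => T vac) (key0 p)
    simp only [Module.End.mul_apply] at h
    rw [hann 0 le_rfl, map_zero] at h
    rw [hΦapply]
    exact h
  -- Φ is surjective
  have hrange : LinearMap.range Φ = ⊤ := by
    apply hgen
    · rintro n _ ⟨p, rfl⟩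
      rcases lt_trichotomy n 0 with hneg | hzero | hpos
      · set i : ℕ := (-n - 1).toNat with hi
        have hn : n = -(i : ℤ) - 1 := by omega
        rw [hn, ← hΦneg i p]
        exact ⟨X i * p, rfl⟩
      · rw [hzero, hΦ0]
        exact Submodule.zero_mem _
      · set k : ℕ := (n - 1).toNat with hk
        have hn : n = (k : ℤ) + 1 := by omega
        rw [hn, hΦpos k p, ← map_smul]
        exact ⟨((k : ℂ) + 1) • pderiv k p, rfl⟩
    · exact ⟨1, hΦ1⟩
  obtain ⟨p, hp⟩ : ∃ p, Φ p = v := by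
    have := hrange ▸ Submodule.mem_top (x := v) (R := ℂ)
    exact this
  have hp0 : p ≠ 0 := by
    rintro rfl
    rw [map_zero] at hp
    exact hv0 hp.symm
  -- pull N back to the polynomial ring
  have hNfder : ∀ k : ℕ, ∀ q ∈ Submodule.comap Φ N, pderiv k q ∈ Submodule.comap Φ N := by
    intro k q hq
    have hk0 : ((k : ℂ) + 1) ≠ 0 := by
      have : ((k : ℂ) + 1) = ((k + 1 : ℕ) : ℂ) := by push_cast; ring
      rw [this]
      exact_mod_cast Nat.succ_ne_zero k
    have h1 : ((k : ℂ) + 1) • Φ (pderiv k q) ∈ N := by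
      rw [← hΦpos k q]
      exact hN ((k : ℤ) + 1) _ hq
    have h2 := N.smul_mem (((k : ℂ) + 1)⁻¹) h1
    rwa [smul_smul, inv_mul_cancel₀ hk0, one_smul] at h2
  have h1mem : (1 : MvPolynomial ℕ ℂ) ∈ Submodule.comap Φ N :=
    hf_fock _ hNfder p (by simpa [hp] using hvN) hp0
  have hvacN : vac ∈ N := by
    have := h1mem
    rwa [Submodule.mem_comap, hΦ1] at this
  exact hgen N hN hvacN
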